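/- Under the exact relaxed iteration of an α-averaged operator with non-decreasing λ_k ∈ [1/(2α), 1/α), the residual satisfies the pointwise bound ‖e_k‖² ≤ ‖z_0 − z*‖² / (τ_k (k+1)), where τ_k = λ_k(1/α − λ_k). -/

import Mathlib

open scoped RealInnerProductSpace

def Nonexpansive {H : Type*} [NormedAddCommGroup H] [InnerProductSpace ℝ H]
    (T : H → H) : Prop := ∀ x y, ‖T x - T y‖ ≤ ‖x - y‖

def Averaged {H : Type*} [NormedAddCommGroup H] [InnerProductSpace ℝ H]
    (α : ℝ) (T : H → H) : Prop :=
  ∃ R : H → H, Nonexpansive R ∧ ∀ x, T x = x + α • (R x - x)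

theorem pointwise_residual_bound_nondecreasing_relaxation
    {H : Type*} [NormedAddCommGroup H] [InnerProductSpace ℝ H]
    (α : ℝ) (hα : α ∈ Set.Ioo (0:ℝ) 1)
    (T : H → H) (hT : Averaged α T)
    (zs : H) (hzs : T zs = zs)
    (lam : ℕ → ℝ) (hlam : ∀ k, lam k ∈ Set.Ico (1/(2*α)) (1/α))
    (hmono : Monotone lam)
    (z : ℕ → H) (hz : ∀ k, z (k+1) = z k + lam k • (T (z k) - z k))
    (e : ℕ → H) (he : ∀ k, e k = z k - T (z k))
    (τ : ℕ → ℝ) (hτ : ∀ k, τ k = lam k * (1/α - lam k)) :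
    ∀ k, ‖e k‖^2 ≤ ‖z 0 - zs‖^2 / (τ k * (k+1)) := by
  obtain ⟨hα0, hα1⟩ := hα
  obtain ⟨R, hR, hTx⟩ := hT
  -- cocoercivity of I - T
  have coco : ∀ x y : H,
      1/(2*α) * ‖(x - T x) - (y - T y)‖^2 ≤ ⟪(x - T x) - (y - T y), x - y⟫ := by
    intro x y
    have hx : (x - T x) - (y - T y) = α • ((x - R x) - (y - R y)) := by
      rw [hTx x, hTx y]; module
    have hkey : ‖(x - R x) - (y - R y)‖^2 ≤ 2 * ⟪(x - R x) - (y - R y), x - y⟫ := by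
      have h1 : ‖R x - R y‖^2 ≤ ‖x - y‖^2 := by
        have := hR x y
        nlinarith [norm_nonneg (R x - R y), norm_nonneg (x - y)]
      have h2 : R x - R y = (x - y) - ((x - R x) - (y - R y)) := by abel
      rw [h2, @norm_sub_sq_real] at h1
      rw [real_inner_comm]
      nlinarith
    rw [hx, norm_smul, real_inner_smul_left, Real.norm_eq_abs, abs_of_pos hα0, mul_pow]
    have hn := norm_nonneg ((x - R x) - (y - R y))
    have hi := hkey
    have hαinv : 0 < 1/(2*α) := by positivity
    -- 1/(2α) * α² ‖u-v‖² ≤ α ⟪u-v, x-y⟫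
    have : 1/(2*α) * (α^2 * ‖(x - R x) - (y - R y)‖^2)
        = α * ((1:ℝ)/2 * ‖(x - R x) - (y - R y)‖^2) := by
      field_simp
    rw [this]
    have := mul_le_mul_of_nonneg_left (by linarith : (1:ℝ)/2 * ‖(x - R x) - (y - R y)‖^2 ≤ ⟪(x - R x) - (y - R y), x - y⟫) (le_of_lt hα0)
    linarith
  have hlam0 : ∀ k, 0 < lam k := fun k =>
    lt_of_lt_of_le (by positivity) (hlam k).1
  have hlam1 : ∀ k, lam k < 1/α := fun k => (hlam k).2
  have hτpos : ∀ k, 0 < τ k := by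
    intro k; rw [hτ k]
    exact mul_pos (hlam0 k) (by linarith [hlam1 k])
  -- Fejér monotonicity
  have fejer : ∀ k, ‖z (k+1) - zs‖^2 ≤ ‖z k - zs‖^2 - τ k * ‖e k‖^2 := by
    intro k
    have hstep : z (k+1) - zs = (z k - zs) - lam k • e k := by
      rw [hz k, he k]; module
    have hcoco := coco (z k) zs
    rw [hzs, sub_self, sub_zero, ← he k] at hcoco
    rw [hstep, @norm_sub_sq_real, real_inner_smul_right, norm_smul, Real.norm_eq_abs,
      abs_of_pos (hlam0 k), mul_pow, real_inner_comm]
    have h1 : 1/(2*α) * ‖e k‖^2 ≤ ⟪e k, z k - zs⟫ := hcoco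
    have h2 := hlam0 k
    have h3 := hlam1 k
    have h4 : lam k * (1/(2*α) * ‖e k‖^2) ≤ lam k * ⟪e k, z k - zs⟫ :=
      mul_le_mul_of_nonneg_left h1 h2.le
    rw [hτ k]
    have hα2 : lam k * (1/(2*α)) * 2 = lam k * (1/α) := by field_simp
    nlinarith [sq_nonneg ‖e k‖]
  -- residual squared norm is non-increasing
  have emono : ∀ k, ‖e (k+1)‖^2 ≤ ‖e k‖^2 := by
    intro k
    have hstep : z (k+1) - z k = -(lam k • e k) := by
      rw [hz k, he k]; module
    have hcoco := coco (z (k+1)) (z k)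
    rw [← he (k+1), ← he k, hstep] at hcoco
    have hinner : ⟪e (k+1) - e k, -(lam k • e k)⟫
        = -(lam k * ⟪e (k+1) - e k, e k⟫) := by
      rw [inner_neg_right, real_inner_smul_right]
    rw [hinner] at hcoco
    have hd : e (k+1) = e k + (e (k+1) - e k) := by abel
    have hnorm : ‖e (k+1)‖^2
        = ‖e k‖^2 + 2 * ⟪e k, e (k+1) - e k⟫ + ‖e (k+1) - e k‖^2 := by
      have h' : e k + (e (k+1) - e k) = e (k+1) := by abel
      have := @norm_add_sq_real _ _ _ (e k) (e (k+1) - e k)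
      rw [h'] at this
      linarith
    have h2 := hlam0 k
    have h3 := hlam1 k
    have hsym : ⟪e k, e (k+1) - e k⟫ = ⟪e (k+1) - e k, e k⟫ := real_inner_comm _ _
    -- from hcoco: lam * ⟪d, e k⟫ ≤ -(1/(2α)) ‖d‖²
    have hαl : α * lam k < 1 := by
      have := mul_lt_mul_of_pos_left h3 hα0
      rwa [mul_one_div, div_self (ne_of_gt hα0)] at this
    have hq : 1/(2*α) * ‖e (k+1) - e k‖^2 ≤ -(lam k * ⟪e (k+1) - e k, e k⟫) := hcoco
    have hne : lam k * (2 * ⟪e (k+1) - e k, e k⟫) ≤ -(2 * (1/(2*α))) * ‖e (k+1) - e k‖^2 := by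
      nlinarith
    have h2a : -(2 * (1/(2*α))) = -(1/α) := by field_simp
    rw [h2a] at hne
    -- so 2⟪e k, d⟫ ≤ -(1/(α lam k)) ‖d‖² ≤ -‖d‖²
    have hn := sq_nonneg ‖e (k+1) - e k‖
    nlinarith [hnorm, hsym]
  have esq : ∀ j k, j ≤ k → ‖e k‖^2 ≤ ‖e j‖^2 := by
    intro j k hjk
    induction k with
    | zero => simp_all
    | succ n ih =>
      rcases Nat.lt_or_ge j (n+1) with h | h
      · exact le_trans (emono n) (ih (Nat.lt_succ_iff.mp h))
      · have : j = n + 1 := le_antisymm hjk h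
        subst this; rfl
  have τmono : ∀ j k, j ≤ k → τ k ≤ τ j := by
    intro j k hjk
    rw [hτ j, hτ k]
    have h1 := hmono hjk
    have h2 := (hlam j).1
    have h3 := (hlam k).1
    have hs : 1/α ≤ lam j + lam k := by
      have : 1/(2*α) + 1/(2*α) = 1/α := by
        rw [← add_div]
        rw [show (1:ℝ)+1 = 2 by norm_num]
        rw [div_eq_div_iff (by positivity) hα0.ne']
        ring
      linarith
    nlinarith
  -- telescoping sum
  have tele : ∀ k, (∑ j ∈ Finset.range k, τ j * ‖e j‖^2) + ‖z k - zs‖^2 ≤ ‖z 0 - zs‖^2 := by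
    intro k
    induction k with
    | zero => simp
    | succ n ih =>
      rw [Finset.sum_range_succ]
      have := fejer n
      linarith
  intro k
  have hsum : (k+1 : ℝ) * (τ k * ‖e k‖^2) ≤ ∑ j ∈ Finset.range (k+1), τ j * ‖e j‖^2 := by
    have : ∀ j ∈ Finset.range (k+1), τ k * ‖e k‖^2 ≤ τ j * ‖e j‖^2 := by
      intro j hj
      rw [Finset.mem_range, Nat.lt_succ_iff] at hj
      have h1 := τmono j k hj
      have h2 := esq j k hj
      have h3 := (hτpos k).le
      have h4 := sq_nonneg ‖e k‖
      nlinarith [hτpos j]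
    have hc := Finset.card_nsmul_le_sum (Finset.range (k+1)) (fun j => τ j * ‖e j‖^2)
      (τ k * ‖e k‖^2) this
    rw [Finset.card_range, nsmul_eq_mul] at hc
    push_cast at hc ⊢
    linarith
  have hbound : (k+1 : ℝ) * (τ k * ‖e k‖^2) ≤ ‖z 0 - zs‖^2 := by
    have := tele (k+1)
    have hn := sq_nonneg ‖z (k+1) - zs‖
    calc (k+1 : ℝ) * (τ k * ‖e k‖^2) ≤ ∑ j ∈ Finset.range (k+1), τ j * ‖e j‖^2 := hsum
      _ ≤ ‖z 0 - zs‖^2 := by nlinarith [norm_nonneg (z (k+1) - zs)]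
  have hpos : 0 < τ k * (k+1 : ℝ) := mul_pos (hτpos k) (by positivity)
  rw [le_div_iff₀ hpos]
  nlinarith [hbound]
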